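/- For every shape parameter λ < 0, the tail of the skew normal distribution satisfies (1 - F_λ(x)) · (-λ) π (1 + λ²) x² · exp((1+λ²)x²/2) → 1 as x → ∞; that is, 1 - F_λ(x) is asymptotically equal to exp(-(1+λ²)x²/2) / ((-λ) π (1+λ²) x²) as x → ∞. -/

import Mathlib

open Real MeasureTheory Filter Topology

/-- Standard normal density. -/
noncomputable def stdPhi (x : ℝ) : ℝ := (Real.sqrt (2 * Real.pi))⁻¹ * Real.exp (-(x ^ 2) / 2)

/-- Standard normal cdf. -/
noncomputable def stdCdf (x : ℝ) : ℝ := ∫ t in Set.Iic x, stdPhi t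

/-- Skew normal density with shape parameter l. -/
noncomputable def snPdf (l x : ℝ) : ℝ := 2 * stdPhi x * stdCdf (l * x)

/-- Skew normal cdf with shape parameter l. -/
noncomputable def snCdf (l x : ℝ) : ℝ := ∫ t in Set.Iic x, snPdf l t

/-- Gumbel extreme value distribution function. -/
noncomputable def gumbel (x : ℝ) : ℝ := Real.exp (-Real.exp (-x))

lemma stdPhi_pos (x : ℝ) : 0 < stdPhi x := by
  have h2 : (0:ℝ) < 2 * Real.pi := by positivity
  exact mul_pos (inv_pos.2 (Real.sqrt_pos.2 h2)) (Real.exp_pos _)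

lemma stdPhi_even (x : ℝ) : stdPhi (-x) = stdPhi x := by simp [stdPhi]

lemma stdPhi_cont : Continuous stdPhi := by unfold stdPhi; fun_prop

lemma stdPhi_eq : stdPhi = fun x => (Real.sqrt (2 * Real.pi))⁻¹ * Real.exp (-(2⁻¹:ℝ) * x ^ 2) := by
  funext x; unfold stdPhi; congr 1; ring

lemma stdPhi_integrable : Integrable stdPhi := by
  rw [stdPhi_eq]
  exact (integrable_exp_neg_mul_sq (by norm_num : (0:ℝ) < 2⁻¹)).const_mul _

lemma stdPhi_total : ∫ x, stdPhi x = 1 := by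
  rw [stdPhi_eq, integral_const_mul, integral_gaussian]
  rw [show Real.pi / 2⁻¹ = 2 * Real.pi by ring]
  exact inv_mul_cancel₀ (ne_of_gt (Real.sqrt_pos.2 (by positivity)))

lemma cdf_hasDerivAt {f : ℝ → ℝ} (hf : Integrable f) (hc : Continuous f) (x : ℝ) :
    HasDerivAt (fun u => ∫ t in Set.Iic u, f t) (f x) x := by
  have key : (fun u => ∫ t in Set.Iic u, f t)
      = fun u => (∫ t in Set.Iic (0:ℝ), f t) + ∫ t in (0:ℝ)..u, f t := by
    funext u
    have h := intervalIntegral.integral_Iic_sub_Iic (hf.integrableOn) (hf.integrableOn)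
      (a := (0:ℝ)) (b := u)
    linarith
  rw [key]
  exact (intervalIntegral.integral_hasDerivAt_right hf.intervalIntegrable
    (hc.stronglyMeasurable.stronglyMeasurableAtFilter) hc.continuousAt).const_add _

lemma cdf_tendsto {f : ℝ → ℝ} (hf : Integrable f) :
    Tendsto (fun u : ℝ => ∫ t in Set.Iic u, f t) atTop (𝓝 (∫ t, f t)) :=
  (MeasureTheory.aecover_Iic tendsto_id).integral_tendsto_of_countably_generated hf

lemma stdCdf_hasDerivAt (x : ℝ) : HasDerivAt stdCdf (stdPhi x) x :=
  cdf_hasDerivAt stdPhi_integrable stdPhi_cont x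

lemma stdCdf_cont : Continuous stdCdf :=
  continuous_iff_continuousAt.2 fun x => (stdCdf_hasDerivAt x).continuousAt

lemma stdCdf_nonneg (x : ℝ) : 0 ≤ stdCdf x :=
  setIntegral_nonneg measurableSet_Iic fun t _ => (stdPhi_pos t).le

lemma stdCdf_le_one (x : ℝ) : stdCdf x ≤ 1 := by
  calc stdCdf x ≤ ∫ t, stdPhi t :=
        setIntegral_le_integral stdPhi_integrable (ae_of_all _ fun t => (stdPhi_pos t).le)
    _ = 1 := stdPhi_total

lemma stdCdf_neg' (x : ℝ) : stdCdf (-x) = ∫ t in Set.Ioi x, stdPhi t := by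
  have h := integral_comp_neg_Iic (-x) stdPhi
  simp only [stdPhi_even, neg_neg] at h
  exact h

lemma stdCdf_add_neg (x : ℝ) : stdCdf x + stdCdf (-x) = 1 := by
  rw [stdCdf_neg']
  unfold stdCdf
  rw [intervalIntegral.integral_Iic_add_Ioi stdPhi_integrable.integrableOn
    stdPhi_integrable.integrableOn]
  exact stdPhi_total

lemma stdCdf_tendsto_one : Tendsto stdCdf atTop (𝓝 1) := by
  have := cdf_tendsto stdPhi_integrable
  rwa [stdPhi_total] at this

lemma snPdf_cont (l : ℝ) : Continuous (snPdf l) := by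
  unfold snPdf
  exact (continuous_const.mul stdPhi_cont).mul
    (stdCdf_cont.comp (continuous_const.mul continuous_id))

lemma snPdf_nonneg (l x : ℝ) : 0 ≤ snPdf l x := by
  unfold snPdf
  have := stdPhi_pos x; have := stdCdf_nonneg (l * x); positivity

lemma snPdf_integrable (l : ℝ) : Integrable (snPdf l) := by
  refine (stdPhi_integrable.const_mul 2).mono (snPdf_cont l).aestronglyMeasurable
    (ae_of_all _ fun x => ?_)
  rw [Real.norm_eq_abs, Real.norm_eq_abs]
  have h1 := stdPhi_pos x
  have h2 := stdCdf_nonneg (l * x)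
  have h3 := stdCdf_le_one (l * x)
  rw [abs_of_nonneg (snPdf_nonneg l x), abs_of_nonneg (by positivity)]
  unfold snPdf
  nlinarith

lemma snPdf_add_neg (l x : ℝ) : snPdf l (-x) + snPdf l x = 2 * stdPhi x := by
  have h := stdCdf_add_neg (l * x)
  unfold snPdf
  rw [stdPhi_even, show l * -x = -(l * x) by ring]
  nlinarith [stdPhi_pos x]

lemma snPdf_total (l : ℝ) : ∫ x, snPdf l x = 1 := by
  have hint := snPdf_integrable l
  have hneg : Integrable (fun x => snPdf l (-x)) := hint.comp_neg
  have h1 : ∫ x, snPdf l x = (∫ x in Set.Iic (0:ℝ), snPdf l x) + ∫ x in Set.Ioi (0:ℝ), snPdf l x :=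
    (intervalIntegral.integral_Iic_add_Ioi hint.integrableOn hint.integrableOn).symm
  have h2 : ∫ x in Set.Ioi (0:ℝ), snPdf l (-x) = ∫ x in Set.Iic (0:ℝ), snPdf l x := by
    have := integral_comp_neg_Ioi (0:ℝ) (snPdf l)
    rwa [neg_zero] at this
  have h2' : ∫ x in Set.Ioi (0:ℝ), stdPhi x = ∫ x in Set.Iic (0:ℝ), stdPhi x := by
    have := integral_comp_neg_Ioi (0:ℝ) stdPhi
    simp only [stdPhi_even, neg_zero] at this
    exact this
  have h3 : (∫ x in Set.Ioi (0:ℝ), snPdf l (-x)) + ∫ x in Set.Ioi (0:ℝ), snPdf l x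
      = ∫ x in Set.Ioi (0:ℝ), 2 * stdPhi x := by
    rw [← integral_add hneg.integrableOn hint.integrableOn]
    exact setIntegral_congr_fun measurableSet_Ioi fun x _ => snPdf_add_neg l x
  have h4 : ∫ x in Set.Ioi (0:ℝ), 2 * stdPhi x = 2 * ∫ x in Set.Ioi (0:ℝ), stdPhi x :=
    integral_const_mul 2 _
  have h5 : (∫ x in Set.Iic (0:ℝ), stdPhi x) + ∫ x in Set.Ioi (0:ℝ), stdPhi x = 1 := by
    rw [intervalIntegral.integral_Iic_add_Ioi stdPhi_integrable.integrableOn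
      stdPhi_integrable.integrableOn]
    exact stdPhi_total
  linarith

lemma snCdf_hasDerivAt (l x : ℝ) : HasDerivAt (snCdf l) (snPdf l x) x :=
  cdf_hasDerivAt (snPdf_integrable l) (snPdf_cont l) x

lemma snCdf_tendsto_one (l : ℝ) : Tendsto (snCdf l) atTop (𝓝 1) := by
  have := cdf_tendsto (snPdf_integrable l)
  rwa [snPdf_total] at this

lemma stdPhi_hasDerivAt (x : ℝ) : HasDerivAt stdPhi (-x * stdPhi x) x := by
  have h1 : HasDerivAt (fun x : ℝ => -(x ^ 2) / 2) (-(↑2 * x ^ 1) / 2) x :=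
    ((hasDerivAt_pow 2 x).neg).div_const 2
  have h2 := (h1.exp).const_mul ((Real.sqrt (2 * Real.pi))⁻¹)
  refine h2.congr_deriv ?_
  unfold stdPhi
  ring

lemma exp_neg_sq_tendsto {a : ℝ} (ha : 0 < a) :
    Tendsto (fun x : ℝ => Real.exp (-(a * x ^ 2) / 2)) atTop (𝓝 0) := by
  have h2 : Tendsto (fun x : ℝ => a * x ^ 2 / 2) atTop atTop :=
    (((tendsto_pow_atTop (by norm_num : 2 ≠ 0)).const_mul_atTop ha)).atTop_div_const (by norm_num)
  have h1 : Tendsto (fun x : ℝ => -(a * x ^ 2) / 2) atTop atBot := by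
    have h := tendsto_neg_atTop_atBot.comp h2
    exact h.congr fun x => by simp [Function.comp]; ring
  exact (Real.tendsto_exp_atBot.comp h1).congr fun x => rfl

lemma stdPhi_tendsto_zero : Tendsto stdPhi atTop (𝓝 0) := by
  have h3 := (exp_neg_sq_tendsto (by norm_num : (0:ℝ) < 1)).const_mul
    ((Real.sqrt (2 * Real.pi))⁻¹)
  rw [mul_zero] at h3
  exact h3.congr fun x => by unfold stdPhi; rw [one_mul]

/-- `t x / (t x + c) → 1` when `t → ∞`. -/
lemma tendsto_div_add_const {t : ℝ → ℝ} (c : ℝ) (ht : Tendsto t atTop atTop) :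
    Tendsto (fun x => t x / (t x + c)) atTop (𝓝 1) := by
  have h1 : Tendsto (fun x => t x + c) atTop atTop := tendsto_atTop_add_const_right _ c ht
  have h2 : Tendsto (fun x => c / (t x + c)) atTop (𝓝 0) :=
    Tendsto.div_atTop tendsto_const_nhds h1
  have h3 := (tendsto_const_nhds (x := (1:ℝ)) (f := atTop)).sub h2
  rw [sub_zero] at h3
  apply h3.congr'
  filter_upwards [h1.eventually_gt_atTop 0] with x hx
  field_simp
  ring

lemma mills : Tendsto (fun y => stdCdf (-y) / (stdPhi y / y)) atTop (𝓝 1) := by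
  apply HasDerivAt.lhopital_zero_atTop
    (f' := fun y => -stdPhi y) (g' := fun y => -stdPhi y * (y ^ 2 + 1) / y ^ 2)
  · filter_upwards with y
    have h := (stdCdf_hasDerivAt (-y)).comp y (hasDerivAt_neg y)
    refine h.congr_deriv ?_
    rw [stdPhi_even]; ring
  · filter_upwards [eventually_gt_atTop 0] with y hy
    have h := (stdPhi_hasDerivAt y).div (hasDerivAt_id y) (ne_of_gt hy)
    refine h.congr_deriv ?_
    simp only [id]
    field_simp
    ring
  · filter_upwards [eventually_gt_atTop 0] with y hy
    have h1 := stdPhi_pos y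
    have : -stdPhi y * (y ^ 2 + 1) / y ^ 2 < 0 := by
      apply div_neg_of_neg_of_pos _ (by positivity)
      nlinarith
    exact this.ne
  · have h : Tendsto (fun y => 1 - stdCdf y) atTop (𝓝 0) := by
      have := (tendsto_const_nhds (x := (1:ℝ)) (f := atTop)).sub stdCdf_tendsto_one
      rwa [sub_self] at this
    refine (h.congr fun y => ?_)
    linarith [stdCdf_add_neg y]
  · exact Tendsto.div_atTop stdPhi_tendsto_zero tendsto_id
  · have key : Tendsto (fun y : ℝ => y ^ 2 / (y ^ 2 + 1)) atTop (𝓝 1) :=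
      tendsto_div_add_const 1 (tendsto_pow_atTop (by norm_num))
    apply key.congr'
    filter_upwards [eventually_gt_atTop 0] with y hy
    have hy' : y ≠ 0 := hy.ne'
    have hB : -stdPhi y * (y ^ 2 + 1) / y ^ 2 ≠ 0 := by
      apply ne_of_lt
      apply div_neg_of_neg_of_pos _ (by positivity)
      nlinarith [stdPhi_pos y]
    rw [div_eq_div_iff (by positivity) hB]
    field_simp

lemma stdPhi_mul (x u : ℝ) :
    stdPhi x * stdPhi u = (2 * Real.pi)⁻¹ * Real.exp (-(x ^ 2 + u ^ 2) / 2) := by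
  unfold stdPhi
  rw [show ((Real.sqrt (2 * Real.pi))⁻¹ * Real.exp (-(x ^ 2) / 2)) *
      ((Real.sqrt (2 * Real.pi))⁻¹ * Real.exp (-(u ^ 2) / 2))
      = (Real.sqrt (2 * Real.pi) * Real.sqrt (2 * Real.pi))⁻¹ *
        (Real.exp (-(x ^ 2) / 2) * Real.exp (-(u ^ 2) / 2)) by rw [mul_inv]; ring]
  rw [Real.mul_self_sqrt (by positivity), ← Real.exp_add]
  congr 1
  ring

theorem skew_normal_tail_neg (l : ℝ) (hl : l < 0) :
    Tendsto (fun x : ℝ =>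
      (1 - snCdf l x) * (-l) * Real.pi * (1 + l ^ 2) * x ^ 2 *
        Real.exp ((1 + l ^ 2) * x ^ 2 / 2)) atTop (𝓝 1) := by
  have hlpos : 0 < -l := neg_pos.2 hl
  set a : ℝ := 1 + l ^ 2 with ha
  have hapos : 0 < a := by positivity
  set c : ℝ := -l * Real.pi * a with hc
  have hcpos : 0 < c := by positivity
  set g : ℝ → ℝ := fun x => Real.exp (-(a * x ^ 2) / 2) / (c * x ^ 2) with hg
  set g' : ℝ → ℝ := fun x => -(Real.exp (-(a * x ^ 2) / 2) * (a * x ^ 2 + 2)) / (c * x ^ 3)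
    with hg'
  have hgd : ∀ x : ℝ, 0 < x → HasDerivAt g (g' x) x := by
    intro x hx
    have hxne : x ≠ 0 := hx.ne'
    have hE : HasDerivAt (fun x : ℝ => Real.exp (-(a * x ^ 2) / 2))
        (Real.exp (-(a * x ^ 2) / 2) * (-(a * (↑2 * x ^ 1)) / 2)) x :=
      ((((hasDerivAt_pow 2 x).const_mul a).neg).div_const 2).exp
    have hD : HasDerivAt (fun x : ℝ => c * x ^ 2) (c * (↑2 * x ^ 1)) x :=
      (hasDerivAt_pow 2 x).const_mul c
    have hDiv := hE.div hD (by positivity)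
    refine hDiv.congr_deriv ?_
    rw [hg']
    field_simp
    ring
  have hfd : ∀ x : ℝ, HasDerivAt (fun x => 1 - snCdf l x) (-(snPdf l x)) x := fun x =>
    (snCdf_hasDerivAt l x).const_sub 1
  have hgto : Tendsto g atTop (𝓝 0) := by
    have h1 := exp_neg_sq_tendsto hapos
    have h2 : Tendsto (fun x : ℝ => (c * x ^ 2)⁻¹) atTop (𝓝 0) :=
      Tendsto.inv_tendsto_atTop ((tendsto_pow_atTop (by norm_num : 2 ≠ 0)).const_mul_atTop hcpos)
    have := h1.mul h2
    rw [mul_zero] at this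
    exact this.congr fun x => (div_eq_mul_inv _ _).symm
  have hfto : Tendsto (fun x => 1 - snCdf l x) atTop (𝓝 0) := by
    have := (tendsto_const_nhds (x := (1:ℝ)) (f := atTop)).sub (snCdf_tendsto_one l)
    rwa [sub_self] at this
  have hmlx : Tendsto (fun x : ℝ => -l * x) atTop atTop :=
    tendsto_id.const_mul_atTop hlpos
  have hml : Tendsto (fun x : ℝ => stdCdf (l * x) / (stdPhi (-l * x) / (-l * x)))
      atTop (𝓝 1) := by
    have := mills.comp hmlx
    exact this.congr fun x => by simp only [Function.comp]; rw [show -(-l * x) = l * x by ring]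
  have hg'ne : ∀ᶠ x in atTop, g' x ≠ 0 := by
    filter_upwards [eventually_gt_atTop 0] with x hx
    simp only [hg']
    apply ne_of_lt
    apply div_neg_of_neg_of_pos
    · exact neg_lt_zero.mpr (mul_pos (Real.exp_pos _) (by nlinarith [sq_nonneg x]))
    · positivity
  have hratio : Tendsto (fun x => -(snPdf l x) / g' x) atTop (𝓝 1) := by
    have hfrac : Tendsto (fun x : ℝ => a * x ^ 2 / (a * x ^ 2 + 2)) atTop (𝓝 1) :=
      tendsto_div_add_const 2 ((tendsto_pow_atTop (by norm_num : 2 ≠ 0)).const_mul_atTop hapos)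
    have hm := hml.mul hfrac
    rw [mul_one] at hm
    apply hm.congr'
    filter_upwards [eventually_gt_atTop 0] with x hx
    have hxne : x ≠ 0 := hx.ne'
    have hQ := stdPhi_pos (-l * x)
    have hE := Real.exp_pos (-(a * x ^ 2) / 2)
    have hprod : 2 * stdPhi x * stdPhi (-l * x) = Real.pi⁻¹ * Real.exp (-(a * x ^ 2) / 2) := by
      rw [mul_assoc, stdPhi_mul]
      rw [show -(x ^ 2 + (-l * x) ^ 2) / 2 = -(a * x ^ 2) / 2 by rw [ha]; ring]
      rw [mul_inv]
      ring
    have hP := stdPhi_pos x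
    have hE' : 2 * stdPhi x * stdPhi (-l * x) * Real.pi = Real.exp (-(a * x ^ 2) / 2) := by
      rw [hprod]; field_simp
    simp only [hg', show snPdf l x = 2 * stdPhi x * stdCdf (l * x) from rfl]
    rw [← hE', hc]
    have hax : (0:ℝ) < a * x ^ 2 + 2 := by positivity
    have hQ' : (0:ℝ) < stdPhi (-(l * x)) := by
      rw [show -(l * x) = -l * x by ring]; exact hQ
    rw [div_div_eq_mul_div, div_div_eq_mul_div, neg_mul, div_mul_div_comm]
    rw [div_eq_div_iff (mul_pos hQ' hax).ne' (neg_ne_zero.mpr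
      (mul_pos (mul_pos (mul_pos (mul_pos two_pos hP) hQ') Real.pi_pos) hax).ne')]
    ring
  have main := HasDerivAt.lhopital_zero_atTop (f' := fun x => -(snPdf l x)) (g' := g')
    (Eventually.of_forall hfd)
    ((eventually_gt_atTop 0).mono fun x hx => hgd x hx)
    hg'ne hfto hgto hratio
  apply main.congr'
  filter_upwards [eventually_gt_atTop 0] with x hx
  have hxne : x ≠ 0 := hx.ne'
  have hEinv : Real.exp (-(a * x ^ 2) / 2) * Real.exp (a * x ^ 2 / 2) = 1 := by
    rw [← Real.exp_add, show -(a * x ^ 2) / 2 + a * x ^ 2 / 2 = 0 by ring, Real.exp_zero]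
  simp only [hg]
  rw [div_div_eq_mul_div, div_eq_iff (by positivity : Real.exp (-(a * x ^ 2) / 2) ≠ 0)]
  rw [show (1 - snCdf l x) * -l * Real.pi * a * x ^ 2 * Real.exp (a * x ^ 2 / 2) *
      Real.exp (-(a * x ^ 2) / 2)
      = (1 - snCdf l x) * (-l * Real.pi * a) * x ^ 2 *
        (Real.exp (-(a * x ^ 2) / 2) * Real.exp (a * x ^ 2 / 2)) by ring, hEinv, ← hc]
  ring
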